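/- For all integers k ≥ 2 and reals d > 0, λ > 0, there exists a real a > 0 with the following property: for every graph G and all disjoint nonempty sets U₁, U₂ ⊆ V(G) such that the number of edges of G between U₁ and U₂ is at least d·|U₁|·|U₂| and |U₁| is sufficiently large, there exists W ⊆ U₁ with |W| ≥ |U₁|^{1−λ} such that for every k-element subset X ⊆ W, the number of vertices of U₂ adjacent in G to all vertices of X is greater than a·|U₂|. -/
import Mathlib

open Finset in
lemma drc_core (α : Type) [DecidableEq α] (G : SimpleGraph α) [DecidableRel G.Adj]
    (U₁ U₂ : Finset α) (k t : ℕ) (hk : 0 < k) (ht : 0 < t) (hU₂ : U₂.Nonempty)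
    (a c : ℝ) (ha : 0 ≤ a)
    (hbig : c ≤ (∑ u ∈ U₁, ((U₂.filter (fun v => G.Adj u v)).card : ℝ) ^ t)
        / (U₂.card : ℝ) ^ t - (U₁.card : ℝ) ^ k * a ^ t) :
    ∃ W ⊆ U₁, c ≤ (W.card : ℝ) ∧ ∀ X ⊆ W, X.card = k →
      a * U₂.card < (({u ∈ (↑U₂ : Set α) | ∀ x ∈ X, G.Adj x u}).ncard : ℝ) := by
  classical
  have hαne : Nonempty α := ⟨hU₂.choose⟩
  have mpos : (0:ℝ) < U₂.card := by exact_mod_cast hU₂.card_pos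
  have mtpos : (0:ℝ) < (U₂.card : ℝ) ^ t := pow_pos mpos t
  set T : Finset (Fin t → α) := Fintype.piFinset (fun _ : Fin t => U₂) with hT
  have Tne : T.Nonempty := Fintype.piFinset_nonempty.2 fun _ => hU₂
  have Tcard : T.card = U₂.card ^ t := by
    simp [hT, Fintype.card_piFinset]
  set Wf : (Fin t → α) → Finset α := fun f => U₁.filter fun u => ∀ i, G.Adj u (f i) with hWf
  set comm : Finset α → Finset α := fun X => U₂.filter fun v => ∀ x ∈ X, G.Adj x v with hcomm
  set Bad : Finset (Finset α) :=
    (U₁.powersetCard k).filter fun X => ((comm X).card : ℝ) ≤ a * U₂.card with hBad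
  set Badf : (Fin t → α) → Finset (Finset α) := fun f => Bad.filter fun X => X ⊆ Wf f with hBadf
  -- Claim A
  have hA : ∑ f ∈ T, (Wf f).card = ∑ u ∈ U₁, (U₂.filter fun v => G.Adj u v).card ^ t := by
    have h1 : ∀ f, (Wf f).card
        = ∑ u ∈ U₁, ∏ i : Fin t, if G.Adj u (f i) then 1 else 0 := by
      intro f
      rw [hWf, Finset.card_filter]
      refine Finset.sum_congr rfl fun u _ => ?_
      rw [Finset.prod_boole]
      simp
    simp_rw [h1]
    rw [Finset.sum_comm]
    refine Finset.sum_congr rfl fun u _ => ?_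
    rw [hT, Finset.sum_prod_piFinset U₂ (fun _ y => if G.Adj u y then 1 else 0)]
    simp [← Finset.card_filter]
  -- Claim B
  have hB : ∑ f ∈ T, (Badf f).card = ∑ X ∈ Bad, (comm X).card ^ t := by
    have h1 : ∀ f, (Badf f).card
        = ∑ X ∈ Bad, ∏ i : Fin t, if ∀ x ∈ X, G.Adj x (f i) then 1 else 0 := by
      intro f
      rw [hBadf, Finset.card_filter]
      refine Finset.sum_congr rfl fun X hX => ?_
      have hXU : X ⊆ U₁ := (Finset.mem_powersetCard.mp (Finset.mem_filter.mp hX).1).1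
      rw [Finset.prod_boole]
      congr 1
      simp only [Finset.mem_univ, forall_true_left, eq_iff_iff]
      constructor
      · intro hsub i x hx
        exact (Finset.mem_filter.mp (hsub hx)).2 i
      · intro h x hx
        exact Finset.mem_filter.mpr ⟨hXU hx, fun i => h i x hx⟩
    simp_rw [h1]
    rw [Finset.sum_comm]
    refine Finset.sum_congr rfl fun X _ => ?_
    rw [hT, Finset.sum_prod_piFinset U₂ (fun _ y => if ∀ x ∈ X, G.Adj x y then 1 else 0)]
    simp [hcomm, ← Finset.card_filter]
  -- Real bounds
  have hBbound : (∑ f ∈ T, ((Badf f).card : ℝ)) ≤ (U₁.card : ℝ) ^ k * (a * U₂.card) ^ t := by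
    have : (∑ f ∈ T, ((Badf f).card : ℝ)) = ∑ X ∈ Bad, ((comm X).card : ℝ) ^ t := by
      exact_mod_cast congrArg (Nat.cast : ℕ → ℝ) hB
    rw [this]
    have h2 : ∀ X ∈ Bad, ((comm X).card : ℝ) ^ t ≤ (a * U₂.card) ^ t := by
      intro X hX
      exact pow_le_pow_left₀ (Nat.cast_nonneg _) (Finset.mem_filter.mp hX).2 t
    calc ∑ X ∈ Bad, ((comm X).card : ℝ) ^ t ≤ ∑ _X ∈ Bad, (a * U₂.card) ^ t :=
          Finset.sum_le_sum h2
      _ = (Bad.card : ℝ) * (a * U₂.card) ^ t := by rw [Finset.sum_const, nsmul_eq_mul]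
      _ ≤ (U₁.card : ℝ) ^ k * (a * U₂.card) ^ t := by
          have h3 : Bad.card ≤ U₁.card ^ k := by
            calc Bad.card ≤ (U₁.powersetCard k).card := Finset.card_filter_le _ _
              _ = U₁.card.choose k := Finset.card_powersetCard _ _
              _ ≤ U₁.card ^ k := Nat.choose_le_pow _ _
          have h4 : (0:ℝ) ≤ (a * U₂.card) ^ t := pow_nonneg (by positivity) t
          exact mul_le_mul_of_nonneg_right (by exact_mod_cast h3) h4
  -- averaging
  have havg : ∑ _f ∈ T, c ≤ ∑ f ∈ T, (((Wf f).card : ℝ) - ((Badf f).card : ℝ)) := by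
    rw [Finset.sum_const, nsmul_eq_mul, Finset.sum_sub_distrib, Tcard]
    have hAc : (∑ f ∈ T, ((Wf f).card : ℝ))
        = ∑ u ∈ U₁, ((U₂.filter fun v => G.Adj u v).card : ℝ) ^ t := by
      exact_mod_cast congrArg (Nat.cast : ℕ → ℝ) hA
    rw [hAc]
    have hm : ((U₂.card ^ t : ℕ) : ℝ) = ((U₂.card : ℝ)) ^ t := by push_cast; ring
    rw [hm]
    have := hbig
    have hexp : (a * (U₂.card:ℝ)) ^ t = a ^ t * (U₂.card:ℝ) ^ t := mul_pow _ _ _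
    have h5 := mul_le_mul_of_nonneg_right hbig (le_of_lt mtpos)
    rw [sub_mul, div_mul_cancel₀ _ (ne_of_gt mtpos)] at h5
    rw [hexp, ← mul_assoc] at hBbound
    linarith
  obtain ⟨f, hfT, hfg⟩ := Finset.exists_le_of_sum_le Tne havg
  -- choice function and deletion
  set ch : Finset α → α := fun X => if h : X.Nonempty then h.choose else Classical.arbitrary α
    with hch
  set R : Finset α := (Badf f).image ch with hR
  refine ⟨Wf f \ R, ?_, ?_, ?_⟩
  · exact (Finset.sdiff_subset).trans (Finset.filter_subset _ _)
  · have h1 : (Wf f).card ≤ (Wf f \ R).card + R.card := by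
      have hsub : Wf f ⊆ (Wf f \ R) ∪ R := by
        intro x hx
        by_cases hxR : x ∈ R
        · exact Finset.mem_union_right _ hxR
        · exact Finset.mem_union_left _ (Finset.mem_sdiff.mpr ⟨hx, hxR⟩)
      calc (Wf f).card ≤ ((Wf f \ R) ∪ R).card := Finset.card_le_card hsub
        _ ≤ (Wf f \ R).card + R.card := Finset.card_union_le _ _
    have h2 : R.card ≤ (Badf f).card := Finset.card_image_le
    have h1' : ((Wf f).card : ℝ) ≤ ((Wf f \ R).card : ℝ) + R.card := by exact_mod_cast h1
    have h2' : ((R.card : ℝ)) ≤ ((Badf f).card : ℝ) := by exact_mod_cast h2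
    linarith
  · intro X hXW hXk
    by_contra hcon
    push_neg at hcon
    have hseteq : {u ∈ (↑U₂ : Set α) | ∀ x ∈ X, G.Adj x u} = ↑(comm X) := by
      ext u; simp [hcomm]
    rw [hseteq, Set.ncard_coe_finset] at hcon
    have hXWf : X ⊆ Wf f := hXW.trans Finset.sdiff_subset
    have hXU : X ⊆ U₁ := hXWf.trans (Finset.filter_subset _ _)
    have hXBad : X ∈ Badf f := by
      rw [hBadf]
      exact Finset.mem_filter.mpr
        ⟨Finset.mem_filter.mpr ⟨Finset.mem_powersetCard.mpr ⟨hXU, hXk⟩, hcon⟩, hXWf⟩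
    have hXne : X.Nonempty := Finset.card_pos.mp (hXk ▸ hk)
    have hchX : ch X ∈ X := by
      rw [hch]; simp only [dif_pos hXne]; exact hXne.choose_spec
    have hchR : ch X ∈ R := Finset.mem_image_of_mem ch hXBad
    have := hXW hchX
    exact (Finset.mem_sdiff.mp this).2 hchR

theorem stmt15 (k : ℕ) (hk : 2 ≤ k) (d lam : ℝ) (hd : 0 < d) (hlam : 0 < lam) :
    ∃ a : ℝ, 0 < a ∧ ∃ N₀ : ℕ, ∀ (α : Type) (G : SimpleGraph α) (U₁ U₂ : Finset α),
      Disjoint U₁ U₂ → U₁.Nonempty → U₂.Nonempty → N₀ ≤ U₁.card →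
      d * U₁.card * U₂.card ≤
        ({p : α × α | p.1 ∈ U₁ ∧ p.2 ∈ U₂ ∧ G.Adj p.1 p.2}.ncard : ℝ) →
      ∃ W ⊆ U₁, (U₁.card : ℝ) ^ ((1 : ℝ) - lam) ≤ (W.card : ℝ) ∧
        ∀ X ⊆ W, X.card = k →
          a * U₂.card < (({u ∈ (↑U₂ : Set α) | ∀ x ∈ X, G.Adj x u}).ncard : ℝ) := by
  classical
  obtain ⟨μ, hμ0, hμ1, hμlam⟩ : ∃ μ : ℝ, 0 < μ ∧ μ ≤ 1 ∧ μ ≤ lam :=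
    ⟨min lam 1, lt_min hlam one_pos, min_le_right _ _, min_le_left _ _⟩
  obtain ⟨δ, hδ0, hδ1, hδd⟩ : ∃ δ : ℝ, 0 < δ ∧ δ < 1 ∧ δ ≤ d :=
    ⟨min d (1/2), lt_min hd (by norm_num),
      lt_of_le_of_lt (min_le_right _ _) (by norm_num), min_le_left _ _⟩
  set s : ℕ := ⌈((k:ℝ)+1)/(μ/2)⌉₊ with hs_def
  have hs : ((k:ℝ)+1) ≤ (s:ℝ) * (μ/2) := by
    rw [← div_le_iff₀ (by positivity)]
    exact Nat.le_ceil _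
  refine ⟨δ^s, pow_pos hδ0 s, max 2 ⌈((2/δ)^((2:ℝ)/μ) : ℝ)⌉₊, ?_⟩
  intro α G U₁ U₂ hdisj hU₁ hU₂ hN hE
  set n := U₁.card with hn_def
  set m := U₂.card with hm_def
  have hn2 : 2 ≤ n := le_trans (le_max_left _ _) hN
  have hn1R : (1:ℝ) ≤ (n:ℝ) := by exact_mod_cast le_trans (by norm_num) hn2
  have hn2R : (2:ℝ) ≤ (n:ℝ) := by exact_mod_cast hn2
  have hnpos : (0:ℝ) < (n:ℝ) := by linarith
  have mpos : (0:ℝ) < (m:ℝ) := by exact_mod_cast hU₂.card_pos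
  have hnR : ((2/δ)^((2:ℝ)/μ) : ℝ) ≤ (n:ℝ) := by
    have h0 : ⌈((2/δ)^((2:ℝ)/μ) : ℝ)⌉₊ ≤ n := le_trans (le_max_right _ _) hN
    exact le_trans (Nat.le_ceil _) (by exact_mod_cast h0)
  have hkey : 2 ≤ δ * (n:ℝ)^(μ/2) := by
    have h1 : ((2/δ):ℝ)^(((2:ℝ)/μ)*(μ/2)) ≤ (n:ℝ)^(μ/2) := by
      rw [Real.rpow_mul (by positivity)]
      exact Real.rpow_le_rpow (Real.rpow_nonneg (by positivity) _) hnR (by positivity)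
    have h2 : ((2:ℝ)/μ)*(μ/2) = 1 := by field_simp
    rw [h2, Real.rpow_one] at h1
    calc (2:ℝ) = δ * (2/δ) := by field_simp
      _ ≤ δ * (n:ℝ)^(μ/2) := mul_le_mul_of_nonneg_left h1 hδ0.le
  -- choose t
  obtain ⟨t, ht_spec, ht_min⟩ :
      ∃ t : ℕ, δ ^ t < (n:ℝ) ^ (-(μ/2)) ∧ ∀ t' < t, ¬ (δ ^ t' < (n:ℝ) ^ (-(μ/2))) := by
    have hexp0 : (0:ℝ) < (n:ℝ) ^ (-(μ/2)) := Real.rpow_pos_of_pos hnpos _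
    have htex : ∃ t : ℕ, δ ^ t < (n:ℝ) ^ (-(μ/2)) := exists_pow_lt_of_lt_one hexp0 hδ1
    exact ⟨Nat.find htex, Nat.find_spec htex, fun t' ht' => Nat.find_min htex ht'⟩
  have hlt1 : (n:ℝ) ^ (-(μ/2)) < 1 :=
    Real.rpow_lt_one_of_one_lt_of_neg (by linarith) (by linarith)
  have ht0 : t ≠ 0 := by
    intro h
    rw [h, pow_zero] at ht_spec
    linarith
  obtain ⟨t', rfl⟩ : ∃ t', t = t' + 1 := ⟨t - 1, (Nat.succ_pred_eq_of_ne_zero ht0).symm⟩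
  have ht2 : δ * (n:ℝ) ^ (-(μ/2)) ≤ δ ^ (t'+1) := by
    have h1 : (n:ℝ) ^ (-(μ/2)) ≤ δ ^ t' := le_of_not_gt (ht_min t' (Nat.lt_succ_self _))
    calc δ * (n:ℝ) ^ (-(μ/2)) ≤ δ * δ ^ t' := mul_le_mul_of_nonneg_left h1 hδ0.le
      _ = δ ^ (t'+1) := by rw [pow_succ]; ring
  have ht1 : δ ^ (t'+1) ≤ (n:ℝ) ^ (-(μ/2)) := ht_spec.le
  -- edge count
  have hset : {p : α × α | p.1 ∈ U₁ ∧ p.2 ∈ U₂ ∧ G.Adj p.1 p.2}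
      = ↑((U₁ ×ˢ U₂).filter fun p => G.Adj p.1 p.2) := by
    ext p
    simp only [Finset.coe_filter, Finset.mem_product, Set.mem_setOf_eq]
    tauto
  rw [hset, Set.ncard_coe_finset] at hE
  have hcount : ((U₁ ×ˢ U₂).filter fun p => G.Adj p.1 p.2).card
      = ∑ u ∈ U₁, (U₂.filter fun v => G.Adj u v).card := by
    rw [Finset.card_filter, Finset.sum_product]
    exact Finset.sum_congr rfl fun u _ => (Finset.card_filter _ _).symm
  rw [hcount] at hE
  push_cast at hE
  -- Jensen
  have hJ : ((n:ℝ)) * (δ * m) ^ (t'+1)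
      ≤ ∑ u ∈ U₁, ((U₂.filter fun v => G.Adj u v).card : ℝ) ^ (t'+1) := by
    have h1 := pow_sum_div_card_le_sum_pow (s := U₁)
      (f := fun u => ((U₂.filter fun v => G.Adj u v).card : ℝ))
      (fun i _ => Nat.cast_nonneg _) t'
    have h2 : (δ * n * m) ^ (t'+1)
        ≤ (∑ u ∈ U₁, ((U₂.filter fun v => G.Adj u v).card : ℝ)) ^ (t'+1) := by
      apply pow_le_pow_left₀ (by positivity)
      calc δ * (n:ℝ) * m ≤ d * n * m := by
            apply mul_le_mul_of_nonneg_right _ mpos.le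
            exact mul_le_mul_of_nonneg_right hδd hnpos.le
        _ ≤ _ := hE
    have h3 : (δ * (n:ℝ) * m) ^ (t'+1) / (n:ℝ)^t' = n * (δ * m)^(t'+1) := by
      field_simp
      ring
    calc (n:ℝ) * (δ*m)^(t'+1) = (δ * (n:ℝ) * m)^(t'+1) / (n:ℝ)^t' := h3.symm
      _ ≤ (∑ u ∈ U₁, ((U₂.filter fun v => G.Adj u v).card : ℝ)) ^ (t'+1) / (n:ℝ)^t' := by
          gcongr
      _ ≤ _ := by
          simpa using h1
  -- main estimate
  have e1 : (n:ℝ) * (δ*(m:ℝ))^(t'+1) / (m:ℝ)^(t'+1) = (n:ℝ) * δ^(t'+1) := by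
    field_simp
    ring
  have step1 : (n:ℝ) * δ^(t'+1)
      ≤ (∑ u ∈ U₁, ((U₂.filter fun v => G.Adj u v).card : ℝ) ^ (t'+1)) / (m:ℝ)^(t'+1) := by
    rw [← e1]
    gcongr
  have hmul : (n:ℝ)^((1:ℝ)-μ/2) = (n:ℝ) * (n:ℝ)^(-(μ/2)) := by
    rw [show (1:ℝ)-μ/2 = 1 + -(μ/2) by ring, Real.rpow_add hnpos, Real.rpow_one]
  have step2 : δ * (n:ℝ)^((1:ℝ)-μ/2) ≤ (n:ℝ) * δ^(t'+1) := by
    rw [hmul]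
    calc δ * ((n:ℝ) * (n:ℝ)^(-(μ/2))) = (n:ℝ) * (δ * (n:ℝ)^(-(μ/2))) := by ring
      _ ≤ (n:ℝ) * δ^(t'+1) := mul_le_mul_of_nonneg_left ht2 hnpos.le
  have step3 : (n:ℝ)^k * (δ^s)^(t'+1) ≤ 1 := by
    have h1 : (δ^s)^(t'+1) = (δ^(t'+1))^s := by rw [← pow_mul, ← pow_mul, Nat.mul_comm]
    have h2 : (δ^(t'+1))^s ≤ ((n:ℝ)^(-(μ/2)))^s :=
      pow_le_pow_left₀ (pow_nonneg hδ0.le _) ht1 s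
    have h3 : ((n:ℝ)^(-(μ/2)))^s = (n:ℝ)^((-(μ/2)) * (s:ℝ)) := by
      rw [← Real.rpow_natCast ((n:ℝ)^(-(μ/2))) s, ← Real.rpow_mul hnpos.le]
    have h4 : (n:ℝ)^k = (n:ℝ)^((k:ℝ)) := (Real.rpow_natCast _ _).symm
    have h5 : (n:ℝ)^((k:ℝ)) * (n:ℝ)^((-(μ/2)) * (s:ℝ)) = (n:ℝ)^((k:ℝ) + (-(μ/2)) * (s:ℝ)) :=
      (Real.rpow_add hnpos _ _).symm
    have h6 : (k:ℝ) + (-(μ/2)) * (s:ℝ) ≤ 0 := by nlinarith [hs]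
    have h7 : (n:ℝ)^((k:ℝ) + (-(μ/2)) * (s:ℝ)) ≤ 1 := by
      calc (n:ℝ)^((k:ℝ) + (-(μ/2)) * (s:ℝ)) ≤ (n:ℝ)^(0:ℝ) :=
            Real.rpow_le_rpow_of_exponent_le hn1R h6
        _ = 1 := Real.rpow_zero _
    calc (n:ℝ)^k * (δ^s)^(t'+1) ≤ (n:ℝ)^k * ((n:ℝ)^(-(μ/2)))^s := by
          rw [h1]
          exact mul_le_mul_of_nonneg_left h2 (by positivity)
      _ = (n:ℝ)^((k:ℝ) + (-(μ/2)) * (s:ℝ)) := by rw [h3, h4, h5]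
      _ ≤ 1 := h7
  have hmono : (n:ℝ)^((1:ℝ)-lam) ≤ (n:ℝ)^((1:ℝ)-μ) :=
    Real.rpow_le_rpow_of_exponent_le hn1R (by linarith)
  have hge1 : (1:ℝ) ≤ (n:ℝ)^((1:ℝ)-μ) := by
    calc (1:ℝ) = (n:ℝ)^(0:ℝ) := (Real.rpow_zero _).symm
      _ ≤ _ := Real.rpow_le_rpow_of_exponent_le hn1R (by linarith)
  have hsplit : (n:ℝ)^((1:ℝ)-μ/2) = (n:ℝ)^(μ/2) * (n:ℝ)^((1:ℝ)-μ) := by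
    rw [← Real.rpow_add hnpos]
    ring_nf
  have hbig2 : (n:ℝ)^((1:ℝ)-lam) + 1 ≤ δ * (n:ℝ)^((1:ℝ)-μ/2) := by
    rw [hsplit]
    have h8 : 2 * (n:ℝ)^((1:ℝ)-μ) ≤ δ * ((n:ℝ)^(μ/2) * (n:ℝ)^((1:ℝ)-μ)) := by
      rw [← mul_assoc]
      exact mul_le_mul_of_nonneg_right hkey (by positivity)
    linarith
  have hbig : (n:ℝ)^((1:ℝ)-lam)
      ≤ (∑ u ∈ U₁, ((U₂.filter fun v => G.Adj u v).card : ℝ) ^ (t'+1)) / (m:ℝ)^(t'+1)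
        - (n:ℝ)^k * (δ^s)^(t'+1) := by
    linarith
  obtain ⟨W, hWsub, hWcard, hWgood⟩ :=
    drc_core α G U₁ U₂ k (t'+1) (by omega) (Nat.succ_pos _) hU₂ (δ^s)
      ((n:ℝ)^((1:ℝ)-lam)) (pow_nonneg hδ0.le _) hbig
  exact ⟨W, hWsub, hWcard, hWgood⟩
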